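/- arXiv:1502.04592 — 2 statements merged into one kernel-verified Lean document; each statement's English description precedes it below -/
import Mathlib

section
/- Let D ≥ 1 and let Φ be a D×D matrix of functions ℝ → ℝ, each entry Φ^{ij} being nonnegative, integrable and causal. Let K be the D×D real matrix of L¹-norms, K^{ij} = ∫_ℝ Φ^{ij}(t) dt, and assume that every complex eigenvalue of K has modulus strictly less than 1. Define matrix convolution powers by (Φ ∗ Φ)^{ij} = Σ_k Φ^{ik} ∗ Φ^{kj} and Φ^{∗(n+1)} = Φ^{∗n} ∗ Φ. Then for each pair (i, j) the series Σ_{n≥1} (Φ^{∗n})^{ij} converges in L¹(ℝ) to a nonnegative, integrable, causal function Ψ^{ij}, and the matrix function Ψ satisfies Ψ(t) = Φ(t) + (Ψ ∗ Φ)(t) entrywise for almost every t. -/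
open MeasureTheory Filter

/-- The convolution of two real functions: `(f ∗ g)(t) = ∫ f(t - s) g(s) ds`. -/
noncomputable def conv (f g : ℝ → ℝ) : ℝ → ℝ := fun t => ∫ s, f (t - s) * g s

/-- A function is causal if it vanishes (a.e.) on negative times. -/
def Causal (h : ℝ → ℝ) : Prop := ∀ᵐ t ∂(volume : Measure ℝ), t < 0 → h t = 0

/-- Matrix convolution: `(A ∗ B)^{ij} = Σ_k A^{ik} ∗ B^{kj}`. -/
noncomputable def matConv {D : ℕ} (A B : Fin D → Fin D → ℝ → ℝ) :
    Fin D → Fin D → ℝ → ℝ :=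
  fun i j t => ∑ k, conv (A i k) (B k j) t

/-- Matrix convolution powers: `matConvPow Φ 1 = Φ`,
`matConvPow Φ (n+1) = (matConvPow Φ n) ∗ Φ`. (The value at `0` is set to `0`.) -/
noncomputable def matConvPow {D : ℕ} (Φ : Fin D → Fin D → ℝ → ℝ) :
    ℕ → Fin D → Fin D → ℝ → ℝ
  | 0 => fun _ _ => 0
  | 1 => Φ
  | n + 2 => matConv (matConvPow Φ (n + 1)) Φ

open scoped ENNReal NNReal Convolution

lemma conv_eq_convolution (f g : ℝ → ℝ) :
    conv f g = MeasureTheory.convolution g f (ContinuousLinearMap.mul ℝ ℝ) volume := by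
  ext t
  unfold conv MeasureTheory.convolution
  congr 1; ext s; simp [mul_comm]

lemma conv_nonneg' {f g : ℝ → ℝ} (hf : ∀ t, 0 ≤ f t) (hg : ∀ t, 0 ≤ g t) (t : ℝ) :
    0 ≤ conv f g t :=
  integral_nonneg fun s => mul_nonneg (hf _) (hg _)

lemma conv_integrable {f g : ℝ → ℝ} (hf : Integrable f) (hg : Integrable g) :
    Integrable (conv f g) := by
  rw [conv_eq_convolution]
  exact hg.integrable_convolution (ContinuousLinearMap.mul ℝ ℝ) hf

lemma conv_integral {f g : ℝ → ℝ} (hf : Integrable f) (hg : Integrable g) :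
    ∫ t, conv f g t = (∫ t, f t) * (∫ t, g t) := by
  rw [conv_eq_convolution]
  rw [show (fun t => (MeasureTheory.convolution g f (ContinuousLinearMap.mul ℝ ℝ) volume) t)
    = MeasureTheory.convolution g f (ContinuousLinearMap.mul ℝ ℝ) volume from rfl]
  rw [MeasureTheory.integral_convolution (ContinuousLinearMap.mul ℝ ℝ) hg hf]
  simp [mul_comm]

lemma causal_conv {f g : ℝ → ℝ} (hf : Causal f) (hg : Causal g) : Causal (conv f g) := by
  refine Eventually.of_forall fun t ht => ?_
  have h1 : ∀ᵐ s ∂(volume : Measure ℝ), f (t - s) * g s = 0 := by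
    have h2 : ∀ᵐ s ∂(volume : Measure ℝ), t - s < 0 → f (t - s) = 0 :=
      (Measure.measurePreserving_sub_left (volume : Measure ℝ) t).quasiMeasurePreserving.ae hf
    filter_upwards [h2, hg] with s hs hgs
    rcases lt_or_ge s 0 with h | h
    · rw [hgs h, mul_zero]
    · rw [hs (by linarith), zero_mul]
  simpa [conv] using integral_eq_zero_of_ae h1

lemma matConvPow_prop {D : ℕ} (Φ : Fin D → Fin D → ℝ → ℝ)
    (hpos : ∀ i j t, 0 ≤ Φ i j t) (hint : ∀ i j, Integrable (Φ i j))
    (hc : ∀ i j, Causal (Φ i j)) (K : Matrix (Fin D) (Fin D) ℝ)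
    (hK : ∀ i j, K i j = ∫ t, Φ i j t) :
    ∀ n i j, (∀ t, 0 ≤ matConvPow Φ (n+1) i j t) ∧ Integrable (matConvPow Φ (n+1) i j) ∧
      Causal (matConvPow Φ (n+1) i j) ∧ (∫ t, matConvPow Φ (n+1) i j t) = (K ^ (n+1)) i j := by
  intro n
  induction n with
  | zero =>
    intro i j
    exact ⟨hpos i j, hint i j, hc i j, by rw [pow_one, hK]; rfl⟩
  | succ m ih =>
    intro i j
    have hdef : matConvPow Φ (m+2) i j
        = fun t => ∑ k, conv (matConvPow Φ (m+1) i k) (Φ k j) t := rfl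
    refine ⟨?_, ?_, ?_, ?_⟩
    · intro t
      rw [hdef]
      exact Finset.sum_nonneg fun k _ =>
        conv_nonneg' (fun s => (ih i k).1 s) (hpos k j) t
    · rw [hdef]
      exact integrable_finset_sum _ fun k _ => conv_integrable (ih i k).2.1 (hint k j)
    · rw [hdef]
      have h : ∀ᵐ t ∂(volume : Measure ℝ), ∀ k, t < 0 → conv (matConvPow Φ (m+1) i k) (Φ k j) t = 0 := by
        rw [MeasureTheory.ae_all_iff]
        exact fun k => causal_conv (ih i k).2.2.1 (hc k j)
      filter_upwards [h] with t ht hlt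
      exact Finset.sum_eq_zero fun k _ => ht k hlt
    · rw [hdef]
      rw [integral_finset_sum _ fun k _ => conv_integrable (ih i k).2.1 (hint k j)]
      have : ∀ k, ∫ t, conv (matConvPow Φ (m+1) i k) (Φ k j) t
          = (K ^ (m+1)) i k * K k j := by
        intro k
        rw [conv_integral (ih i k).2.1 (hint k j), (ih i k).2.2.2, hK]
      simp_rw [this]
      conv_rhs => rw [pow_succ, Matrix.mul_apply]

lemma lconv_aux {f g : ℝ → ℝ≥0∞} (hf : AEMeasurable f (volume : Measure ℝ))
    (hg : AEMeasurable g (volume : Measure ℝ)) :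
    AEMeasurable (fun t => ∫⁻ s, f (t - s) * g s) (volume : Measure ℝ) ∧
      ∫⁻ t, ∫⁻ s, f (t - s) * g s = (∫⁻ t, f t) * (∫⁻ t, g t) := by
  obtain ⟨f', hf'm, hff'⟩ := hf
  obtain ⟨g', hg'm, hgg'⟩ := hg
  have key : ∀ t, (∫⁻ s, f (t - s) * g s) = ∫⁻ s, f' (t - s) * g' s := by
    intro t
    apply lintegral_congr_ae
    have h1 : ∀ᵐ s ∂(volume : Measure ℝ), f (t - s) = f' (t - s) :=
      (Measure.measurePreserving_sub_left (volume : Measure ℝ) t).quasiMeasurePreserving.ae hff'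
    filter_upwards [h1, hgg'] with s hs1 hs2
    rw [hs1, hs2]
  have hFmeas : Measurable (Function.uncurry fun t s => f' (t - s) * g' s) :=
    (hf'm.comp (measurable_fst.sub measurable_snd)).mul (hg'm.comp measurable_snd)
  have hmeas' : Measurable fun t => ∫⁻ s, f' (t - s) * g' s :=
    Measurable.lintegral_prod_right hFmeas
  constructor
  · exact ⟨fun t => ∫⁻ s, f' (t - s) * g' s, hmeas', Eventually.of_forall key⟩
  · rw [lintegral_congr key]
    rw [lintegral_lintegral_swap hFmeas.aemeasurable]
    have inner : ∀ s : ℝ, (∫⁻ t, f' (t - s) * g' s) = (∫⁻ t, f' t) * g' s := by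
      intro s
      have hm1 : Measurable fun t : ℝ => f' (t - s) := hf'm.comp (measurable_sub_const s)
      rw [lintegral_mul_const _ hm1]
      congr 1
      exact (measurePreserving_sub_right (volume : Measure ℝ) s).lintegral_comp hf'm
    rw [lintegral_congr inner, lintegral_const_mul _ hg'm]
    rw [lintegral_congr_ae hff', lintegral_congr_ae hgg']

section Spectral

attribute [local instance] Matrix.linftyOpNormedRing Matrix.linftyOpNormedAlgebra

lemma entry_abs_le_linfty {D : ℕ} (A : Matrix (Fin D) (Fin D) ℂ) (i j : Fin D) :
    ‖A i j‖ ≤ ‖A‖ := by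
  have h : ‖A i j‖₊ ≤ ‖A‖₊ := by
    rw [Matrix.linfty_opNNNorm_def]
    calc ‖A i j‖₊ ≤ ∑ k, ‖A i k‖₊ :=
          Finset.single_le_sum (f := fun k => ‖A i k‖₊) (fun k _ => zero_le)
            (Finset.mem_univ j)
      _ ≤ _ := Finset.le_sup (f := fun i => ∑ k, ‖A i k‖₊) (Finset.mem_univ i)
  exact_mod_cast h

lemma summable_pow_entry {D : ℕ} (hD : 1 ≤ D) (K : Matrix (Fin D) (Fin D) ℝ)
    (hspec : ∀ μ ∈ spectrum ℂ (K.map Complex.ofReal), ‖μ‖ < 1) (i j : Fin D) :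
    Summable fun n : ℕ => |(K ^ (n+1)) i j| := by
  haveI : Nonempty (Fin D) := Fin.pos_iff_nonempty.mp hD
  set K' : Matrix (Fin D) (Fin D) ℂ := K.map Complex.ofReal with hK'
  have hmap : ∀ m : ℕ, K' ^ m = (K ^ m).map Complex.ofReal := by
    intro m
    have h0 : K' = Complex.ofRealHom.mapMatrix K := rfl
    have h1 : ∀ M : Matrix (Fin D) (Fin D) ℝ,
        Complex.ofRealHom.mapMatrix M = M.map Complex.ofReal := fun _ => rfl
    rw [h0, ← h1, map_pow]
  have hsr : spectralRadius ℂ K' < 1 := by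
    have h1 : ∀ z ∈ spectrum ℂ K', ‖z‖₊ < (1 : ℝ≥0) := by
      intro z hz
      have h2 := hspec z hz
      rw [← NNReal.coe_lt_coe, coe_nnnorm]
      exact_mod_cast h2
    simpa using spectrum.spectralRadius_lt_of_forall_lt K' h1
  obtain ⟨r, hr1, hr2⟩ := ENNReal.lt_iff_exists_nnreal_btwn.mp hsr
  have hgel := spectrum.pow_nnnorm_pow_one_div_tendsto_nhds_spectralRadius K'
  have hev : ∀ᶠ n : ℕ in atTop,
      ((‖K' ^ n‖₊ : ℝ≥0∞) ^ (1/(n:ℝ)) < (r : ℝ≥0∞) ∧ 1 ≤ n) :=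
    (hgel.eventually_lt_const hr1).and (eventually_ge_atTop 1)
  obtain ⟨N, hN⟩ := eventually_atTop.mp hev
  have hbound : ∀ n, N ≤ n → ‖K' ^ n‖₊ ≤ r ^ n := by
    intro n hn
    obtain ⟨h1, h2⟩ := hN n hn
    have hne : (n : ℝ) ≠ 0 := Nat.cast_ne_zero.mpr (by omega)
    have heq : ((‖K' ^ n‖₊ : ℝ≥0∞)) = ((‖K' ^ n‖₊ : ℝ≥0∞) ^ (1/(n:ℝ))) ^ (n:ℝ) := by
      rw [← ENNReal.rpow_mul, one_div, inv_mul_cancel₀ hne, ENNReal.rpow_one]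
    have h3 : (‖K' ^ n‖₊ : ℝ≥0∞) ≤ (r : ℝ≥0∞) ^ (n : ℝ) := by
      rw [heq]
      exact ENNReal.rpow_le_rpow h1.le (Nat.cast_nonneg n)
    have h4 : ((r : ℝ≥0∞) ^ (n : ℝ)) = ((r ^ n : ℝ≥0) : ℝ≥0∞) := by
      rw [← ENNReal.coe_rpow_of_nonneg _ (Nat.cast_nonneg n), NNReal.rpow_natCast]
    rw [h4] at h3
    exact_mod_cast h3
  have hrlt : (r : ℝ) < 1 := by
    have := ENNReal.coe_lt_coe.mp (by simpa using hr2)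
    exact_mod_cast this
  have hgeo : Summable fun n : ℕ => (r : ℝ) ^ n :=
    summable_geometric_of_lt_one r.coe_nonneg hrlt
  have hsumN : Summable fun n : ℕ => ‖K' ^ n‖ := by
    rw [← summable_nat_add_iff N]
    refine Summable.of_nonneg_of_le (fun n => norm_nonneg _) (fun n => ?_)
      ((summable_nat_add_iff N).mpr hgeo)
    have := hbound (n + N) (Nat.le_add_left N n)
    calc ‖K' ^ (n + N)‖ = ((‖K' ^ (n + N)‖₊ : ℝ≥0) : ℝ) := by rw [coe_nnnorm]
      _ ≤ ((r ^ (n + N) : ℝ≥0) : ℝ) := by exact_mod_cast this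
      _ = (r : ℝ) ^ (n + N) := by push_cast; ring
  refine Summable.of_nonneg_of_le (fun n => abs_nonneg _) (fun n => ?_)
    ((summable_nat_add_iff 1).mpr hsumN)
  have h5 : |(K ^ (n+1)) i j| = ‖(K' ^ (n+1)) i j‖ := by
    rw [hmap (n+1)]
    simp [Matrix.map_apply]
  rw [h5]
  exact entry_abs_le_linfty _ i j

end Spectral

/-- Let `Φ` be a `D×D` matrix of nonnegative, integrable, causal kernels
whose matrix of `L¹`-norms `K` has all complex eigenvalues of modulus `< 1` (stability
condition (H)). Then for each entry the series `Σ_{n ≥ 1} (Φ^{∗n})^{ij}` converges in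
`L¹(ℝ)` to a nonnegative, integrable, causal function `Ψ^{ij}`, and the matrix function
`Ψ` satisfies `Ψ = Φ + Ψ ∗ Φ` entrywise almost everywhere. -/
theorem stmt_10 (D : ℕ) (hD : 1 ≤ D) (Φ : Fin D → Fin D → ℝ → ℝ)
    (hpos : ∀ i j t, 0 ≤ Φ i j t) (hint : ∀ i j, Integrable (Φ i j))
    (hc : ∀ i j, Causal (Φ i j))
    (hspec : ∀ μ ∈ spectrum ℂ
      ((Matrix.of fun i j => ∫ t, Φ i j t).map (Complex.ofReal)), ‖μ‖ < 1) :
    ∃ Ψ : Fin D → Fin D → ℝ → ℝ,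
      (∀ i j, Integrable (Ψ i j) ∧ (∀ᵐ t ∂(volume : Measure ℝ), 0 ≤ Ψ i j t) ∧
        Causal (Ψ i j) ∧
        Tendsto (fun N => ∫ t, |(∑ n ∈ Finset.Icc 1 N, matConvPow Φ n i j t) - Ψ i j t|)
          atTop (nhds 0)) ∧
      (∀ i j, ∀ᵐ t ∂(volume : Measure ℝ),
        Ψ i j t = Φ i j t + ∑ k, conv (Ψ i k) (Φ k j) t) := by
  classical
  set K : Matrix (Fin D) (Fin D) ℝ := Matrix.of fun i j => ∫ t, Φ i j t with hKdef
  have hK : ∀ i j, K i j = ∫ t, Φ i j t := fun i j => rfl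
  have main := matConvPow_prop Φ hpos hint hc K hK
  have hcnn : ∀ (n : ℕ) i j, 0 ≤ (K ^ (n+1)) i j := fun n i j => by
    rw [← (main n i j).2.2.2]; exact integral_nonneg ((main n i j).1)
  have hsum : ∀ i j, Summable fun n : ℕ => (K ^ (n+1)) i j := by
    intro i j
    have h := summable_pow_entry hD K hspec i j
    refine h.congr fun n => abs_of_nonneg (hcnn n i j)
  -- the ENNReal-valued sum of the series
  set G : Fin D → Fin D → ℝ → ℝ≥0∞ :=
    fun i j t => ∑' n : ℕ, ENNReal.ofReal (matConvPow Φ (n+1) i j t) with hGdef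
  have hFmeas : ∀ (n : ℕ) i j,
      AEMeasurable (fun t => ENNReal.ofReal (matConvPow Φ (n+1) i j t)) volume :=
    fun n i j => ENNReal.measurable_ofReal.comp_aemeasurable (main n i j).2.1.aemeasurable
  have hGmeas : ∀ i j, AEMeasurable (G i j) volume := fun i j =>
    AEMeasurable.ennreal_tsum (fun n => hFmeas n i j)
  have hGint : ∀ i j, ∫⁻ t, G i j t = ENNReal.ofReal (∑' n : ℕ, (K ^ (n+1)) i j) := by
    intro i j
    rw [hGdef]
    rw [lintegral_tsum (fun n => hFmeas n i j)]
    have h1 : ∀ n : ℕ, ∫⁻ t, ENNReal.ofReal (matConvPow Φ (n+1) i j t)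
        = ENNReal.ofReal ((K ^ (n+1)) i j) := by
      intro n
      rw [← ofReal_integral_eq_lintegral_ofReal (main n i j).2.1
        (Eventually.of_forall (main n i j).1), (main n i j).2.2.2]
    simp_rw [h1]
    rw [← ENNReal.ofReal_tsum_of_nonneg (fun n => hcnn n i j) (hsum i j)]
  have hGlt : ∀ i j, ∫⁻ t, G i j t < ⊤ := fun i j => by
    rw [hGint]; exact ENNReal.ofReal_lt_top
  have hGfin : ∀ i j, ∀ᵐ t ∂(volume : Measure ℝ), G i j t < ⊤ := fun i j =>
    ae_lt_top' (hGmeas i j) (hGlt i j).ne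
  have hΨnn : ∀ i j t, 0 ≤ (G i j t).toReal := fun i j t => ENNReal.toReal_nonneg
  have hΨmeas : ∀ i j, AEMeasurable (fun t => (G i j t).toReal) volume := fun i j =>
    (hGmeas i j).ennreal_toReal
  have hΨint : ∀ i j, Integrable (fun t => (G i j t).toReal) := by
    intro i j
    refine ⟨(hΨmeas i j).aestronglyMeasurable, ?_⟩
    rw [hasFiniteIntegral_iff_ofReal (Eventually.of_forall (hΨnn i j))]
    calc ∫⁻ t, ENNReal.ofReal (G i j t).toReal ≤ ∫⁻ t, G i j t :=
          lintegral_mono (fun t => ENNReal.ofReal_toReal_le)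
      _ < ⊤ := hGlt i j
  refine ⟨fun i j t => (G i j t).toReal, ?_, ?_⟩
  · intro i j
    refine ⟨hΨint i j, Eventually.of_forall (hΨnn i j), ?_, ?_⟩
    · -- causal
      have hall : ∀ᵐ t ∂(volume : Measure ℝ), ∀ n : ℕ, t < 0 → matConvPow Φ (n+1) i j t = 0 :=
        ae_all_iff.mpr (fun n => (main n i j).2.2.1)
      filter_upwards [hall] with t ht hlt
      have hz : G i j t = 0 := by
        rw [hGdef]
        simp only [ht _ hlt, ENNReal.ofReal_zero, tsum_zero]
      rw [hz, ENNReal.toReal_zero]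
    · -- L¹ convergence
      have hIcc : ∀ (N : ℕ) (t : ℝ), (∑ n ∈ Finset.Icc 1 N, matConvPow Φ n i j t)
          = ∑ m ∈ Finset.range N, matConvPow Φ (m+1) i j t := by
        intro N t
        rw [← Finset.Ico_add_one_right_eq_Icc, Finset.sum_Ico_eq_sum_range]
        refine Finset.sum_congr (by norm_num) fun m _ => by rw [add_comm]
      have hSint : ∀ N : ℕ, Integrable (fun t => ∑ m ∈ Finset.range N, matConvPow Φ (m+1) i j t) :=
        fun N => integrable_finset_sum _ (fun m _ => (main m i j).2.1)
      have hSval : ∀ N : ℕ, ∫ t, (∑ m ∈ Finset.range N, matConvPow Φ (m+1) i j t)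
          = ∑ m ∈ Finset.range N, (K ^ (m+1)) i j := by
        intro N
        rw [integral_finset_sum _ (fun m _ => (main m i j).2.1)]
        exact Finset.sum_congr rfl fun m _ => (main m i j).2.2.2
      have hle : ∀ᵐ t ∂(volume : Measure ℝ), ∀ N : ℕ,
          (∑ m ∈ Finset.range N, matConvPow Φ (m+1) i j t) ≤ (G i j t).toReal := by
        filter_upwards [hGfin i j] with t ht
        intro N
        have h1 : (∑ m ∈ Finset.range N, ENNReal.ofReal (matConvPow Φ (m+1) i j t)) ≤ G i j t :=
          ENNReal.sum_le_tsum _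
        have h2 := ENNReal.toReal_mono ht.ne h1
        rw [ENNReal.toReal_sum (fun m _ => ENNReal.ofReal_ne_top)] at h2
        calc (∑ m ∈ Finset.range N, matConvPow Φ (m+1) i j t)
            = ∑ m ∈ Finset.range N, (ENNReal.ofReal (matConvPow Φ (m+1) i j t)).toReal :=
              Finset.sum_congr rfl fun m _ => (ENNReal.toReal_ofReal ((main m i j).1 t)).symm
          _ ≤ (G i j t).toReal := h2
      have hΨval : ∫ t, (G i j t).toReal = ∑' n : ℕ, (K ^ (n+1)) i j := by
        rw [integral_eq_lintegral_of_nonneg_ae (Eventually.of_forall (hΨnn i j))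
          (hΨmeas i j).aestronglyMeasurable]
        have heq2 : ∫⁻ t, ENNReal.ofReal (G i j t).toReal = ∫⁻ t, G i j t := by
          apply lintegral_congr_ae
          filter_upwards [hGfin i j] with t ht
          exact ENNReal.ofReal_toReal ht.ne
        rw [heq2, hGint i j, ENNReal.toReal_ofReal (tsum_nonneg (fun n => hcnn n i j))]
      have hdiff : ∀ N : ℕ, ∫ t, |(∑ n ∈ Finset.Icc 1 N, matConvPow Φ n i j t) - (G i j t).toReal|
          = (∑' n : ℕ, (K ^ (n+1)) i j) - ∑ m ∈ Finset.range N, (K ^ (m+1)) i j := by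
        intro N
        have e1 : (fun t => |(∑ n ∈ Finset.Icc 1 N, matConvPow Φ n i j t) - (G i j t).toReal|)
            = fun t => |(∑ m ∈ Finset.range N, matConvPow Φ (m+1) i j t) - (G i j t).toReal| := by
          funext t; rw [hIcc]
        rw [e1]
        have e2 : ∀ᵐ t ∂(volume : Measure ℝ),
            |(∑ m ∈ Finset.range N, matConvPow Φ (m+1) i j t) - (G i j t).toReal|
              = (G i j t).toReal - ∑ m ∈ Finset.range N, matConvPow Φ (m+1) i j t := by
          filter_upwards [hle] with t ht
          rw [abs_sub_comm, abs_of_nonneg (sub_nonneg.mpr (ht N))]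
        rw [integral_congr_ae e2, integral_sub (hΨint i j) (hSint N), hΨval, hSval]
      have htend : Tendsto (fun N : ℕ =>
          (∑' n : ℕ, (K ^ (n+1)) i j) - ∑ m ∈ Finset.range N, (K ^ (m+1)) i j) atTop (nhds 0) := by
        have h1 := (hsum i j).hasSum.tendsto_sum_nat
        have h0 : Tendsto (fun _ : ℕ => ∑' n : ℕ, (K ^ (n+1)) i j) atTop
            (nhds (∑' n : ℕ, (K ^ (n+1)) i j)) := tendsto_const_nhds
        simpa using h0.sub h1
      exact Tendsto.congr (fun N => (hdiff N).symm) htend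
  · -- renewal equation
    intro i j
    have hφmeas : ∀ (k j' : Fin D), AEMeasurable (fun t => ENNReal.ofReal (Φ k j' t)) volume :=
      fun k j' => ENNReal.measurable_ofReal.comp_aemeasurable (hint k j').aemeasurable
    have hφlt : ∀ (k : Fin D), ∫⁻ s, ENNReal.ofReal (Φ k j s) < ⊤ := by
      intro k
      rw [← ofReal_integral_eq_lintegral_ofReal (hint k j) (Eventually.of_forall (hpos k j))]
      exact ENNReal.ofReal_lt_top
    -- Step A : pointwise (a.e.) ENNReal form of the convolutions in matConvPow
    have hA : ∀ (n : ℕ) (k : Fin D), ∀ᵐ t ∂(volume : Measure ℝ),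
        ENNReal.ofReal (conv (matConvPow Φ (n+1) i k) (Φ k j) t)
          = ∫⁻ s, ENNReal.ofReal (matConvPow Φ (n+1) i k (t - s)) * ENNReal.ofReal (Φ k j s) := by
      intro n k
      have hconvex : ∀ᵐ t ∂(volume : Measure ℝ),
          Integrable (fun s => matConvPow Φ (n+1) i k (t - s) * Φ k j s) := by
        have h0 := (hint k j).ae_convolution_exists (L := ContinuousLinearMap.mul ℝ ℝ)
          (μ := volume) (ν := volume) (main n i k).2.1
        filter_upwards [h0] with t ht
        have ht' : Integrable (fun s => Φ k j s * matConvPow Φ (n+1) i k (t - s)) volume := ht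
        exact ht'.congr (Eventually.of_forall fun s => mul_comm _ _)
      filter_upwards [hconvex] with t ht
      have h1 : conv (matConvPow Φ (n+1) i k) (Φ k j) t
          = ∫ s, matConvPow Φ (n+1) i k (t - s) * Φ k j s := rfl
      rw [h1, ofReal_integral_eq_lintegral_ofReal ht
        (Eventually.of_forall fun s => mul_nonneg ((main n i k).1 _) (hpos k j _))]
      exact lintegral_congr fun s => ENNReal.ofReal_mul ((main n i k).1 _)
    -- Step B : the ENNReal renewal identity
    have hE1 : ∀ᵐ t ∂(volume : Measure ℝ),
        G i j t = ENNReal.ofReal (Φ i j t)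
          + ∑ k, ∫⁻ s, G i k (t - s) * ENNReal.ofReal (Φ k j s) := by
      have hAall : ∀ᵐ t ∂(volume : Measure ℝ), ∀ (n : ℕ) (k : Fin D),
          ENNReal.ofReal (conv (matConvPow Φ (n+1) i k) (Φ k j) t)
            = ∫⁻ s, ENNReal.ofReal (matConvPow Φ (n+1) i k (t - s)) * ENNReal.ofReal (Φ k j s) :=
        ae_all_iff.mpr fun n => ae_all_iff.mpr fun k => hA n k
      filter_upwards [hAall] with t ht
      have hstep : ∀ n : ℕ, ENNReal.ofReal (matConvPow Φ (n+2) i j t)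
          = ∑ k, ENNReal.ofReal (conv (matConvPow Φ (n+1) i k) (Φ k j) t) := by
        intro n
        have h2 : matConvPow Φ (n+2) i j t = ∑ k, conv (matConvPow Φ (n+1) i k) (Φ k j) t := rfl
        rw [h2, ENNReal.ofReal_sum_of_nonneg
          (fun k _ => conv_nonneg' ((main n i k).1) (hpos k j) t)]
      calc G i j t
          = ENNReal.ofReal (matConvPow Φ 1 i j t)
            + ∑' n : ℕ, ENNReal.ofReal (matConvPow Φ (n+2) i j t) := by
            rw [hGdef]; exact tsum_eq_zero_add' ENNReal.summable
        _ = ENNReal.ofReal (Φ i j t)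
            + ∑' n : ℕ, ∑ k, ∫⁻ s, ENNReal.ofReal (matConvPow Φ (n+1) i k (t - s))
                * ENNReal.ofReal (Φ k j s) := by
            congr 1
            refine tsum_congr fun n => ?_
            rw [hstep n]
            exact Finset.sum_congr rfl fun k _ => ht n k
        _ = ENNReal.ofReal (Φ i j t)
            + ∑ k, ∑' n : ℕ, ∫⁻ s, ENNReal.ofReal (matConvPow Φ (n+1) i k (t - s))
                * ENNReal.ofReal (Φ k j s) := by
            congr 1
            exact Summable.tsum_finsetSum fun k _ => ENNReal.summable
        _ = ENNReal.ofReal (Φ i j t)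
            + ∑ k, ∫⁻ s, ∑' n : ℕ, ENNReal.ofReal (matConvPow Φ (n+1) i k (t - s))
                * ENNReal.ofReal (Φ k j s) := by
            congr 1
            refine Finset.sum_congr rfl fun k _ => ?_
            rw [← lintegral_tsum]
            intro n
            have hm1 : AEMeasurable (fun s => ENNReal.ofReal (matConvPow Φ (n+1) i k (t - s)))
                volume :=
              (hFmeas n i k).comp_quasiMeasurePreserving
                (Measure.measurePreserving_sub_left volume t).quasiMeasurePreserving
            exact hm1.mul (hφmeas k j)
        _ = ENNReal.ofReal (Φ i j t)
            + ∑ k, ∫⁻ s, G i k (t - s) * ENNReal.ofReal (Φ k j s) := by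
            congr 1
            refine Finset.sum_congr rfl fun k _ => ?_
            refine lintegral_congr fun s => ?_
            rw [ENNReal.tsum_mul_right, hGdef]
    -- Step C : finiteness of the lintegral convolutions
    have hI := fun k : Fin D => lconv_aux (hGmeas i k) (hφmeas k j)
    have hIfin : ∀ k : Fin D, ∀ᵐ t ∂(volume : Measure ℝ),
        (∫⁻ s, G i k (t - s) * ENNReal.ofReal (Φ k j s)) < ⊤ := by
      intro k
      refine ae_lt_top' (hI k).1 ?_
      rw [(hI k).2]
      exact (ENNReal.mul_lt_top (hGlt i k) (hφlt k)).ne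
    -- Step D : real convolution equals toReal of the lintegral convolution
    have hD2 : ∀ k : Fin D, ∀ᵐ t ∂(volume : Measure ℝ),
        conv (fun u => (G i k u).toReal) (Φ k j) t
          = (∫⁻ s, G i k (t - s) * ENNReal.ofReal (Φ k j s)).toReal := by
      intro k
      have hGae : ∀ t : ℝ, ∀ᵐ s ∂(volume : Measure ℝ), G i k (t - s) < ⊤ := fun t =>
        (Measure.measurePreserving_sub_left volume t).quasiMeasurePreserving.ae (hGfin i k)
      have haemeas : ∀ t : ℝ, AEMeasurable (fun s => (G i k (t - s)).toReal * Φ k j s) volume := by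
        intro t
        have h1 : AEMeasurable (fun s => G i k (t - s)) volume :=
          (hGmeas i k).comp_quasiMeasurePreserving
            (Measure.measurePreserving_sub_left volume t).quasiMeasurePreserving
        exact h1.ennreal_toReal.mul (hint k j).aemeasurable
      have heqf : ∀ t : ℝ, ∀ᵐ s ∂(volume : Measure ℝ),
          ENNReal.ofReal ((G i k (t - s)).toReal * Φ k j s)
            = G i k (t - s) * ENNReal.ofReal (Φ k j s) := by
        intro t
        filter_upwards [hGae t] with s hs
        rw [ENNReal.ofReal_mul ENNReal.toReal_nonneg, ENNReal.ofReal_toReal hs.ne]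
      filter_upwards [hIfin k] with t ht
      have h1 : conv (fun u => (G i k u).toReal) (Φ k j) t
          = ∫ s, (G i k (t - s)).toReal * Φ k j s := rfl
      rw [h1, integral_eq_lintegral_of_nonneg_ae
        (Eventually.of_forall fun s => mul_nonneg ENNReal.toReal_nonneg (hpos k j s))
        (haemeas t).aestronglyMeasurable]
      rw [lintegral_congr_ae (heqf t)]
    -- combine
    have hDall : ∀ᵐ t ∂(volume : Measure ℝ), ∀ k : Fin D,
        conv (fun u => (G i k u).toReal) (Φ k j) t
          = (∫⁻ s, G i k (t - s) * ENNReal.ofReal (Φ k j s)).toReal :=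
      ae_all_iff.mpr hD2
    have hIfinall : ∀ᵐ t ∂(volume : Measure ℝ), ∀ k : Fin D,
        (∫⁻ s, G i k (t - s) * ENNReal.ofReal (Φ k j s)) < ⊤ :=
      ae_all_iff.mpr hIfin
    filter_upwards [hE1, hDall, hIfinall] with t h1 h3 h2
    rw [h1, ENNReal.toReal_add ENNReal.ofReal_ne_top
      (ENNReal.sum_lt_top.mpr (fun k _ => h2 k)).ne,
      ENNReal.toReal_ofReal (hpos i j t)]
    congr 1
    rw [ENNReal.toReal_sum (fun k _ => (h2 k).ne)]
    exact Finset.sum_congr rfl fun k _ => (h3 k).symm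
end

section
/- Let α, β, γ > 0 and let z < 0 be a real number, and set c = −z/β > 0. Then the function t ↦ e^{z t} α β (1 + β t)^{−(1+γ)} is integrable on [0, ∞) and ∫₀^∞ e^{z t} α β (1 + β t)^{−(1+γ)} dt = α e^{c} c^{γ} ∫_c^∞ e^{−u} u^{−(1+γ)} du. -/
open MeasureTheory

lemma integral_comp_add_right_Ioi (g : ℝ → ℝ) (a d : ℝ) :
    (∫ x in Set.Ioi a, g (x + d)) = ∫ x in Set.Ioi (a + d), g x := by
  have h1 : ∀ x : ℝ, (Set.Ioi (a + d)).indicator g (x + d)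
      = (Set.Ioi a).indicator (fun y => g (y + d)) x := by
    intro x
    by_cases hx : x ∈ Set.Ioi a
    · rw [Set.indicator_of_mem hx, Set.indicator_of_mem]
      simpa using add_lt_add_right hx d
    · rw [Set.indicator_of_notMem hx, Set.indicator_of_notMem]
      simp only [Set.mem_Ioi, not_lt] at hx ⊢
      linarith
  rw [← integral_indicator measurableSet_Ioi, ← integral_indicator measurableSet_Ioi,
    ← integral_add_right_eq_self ((Set.Ioi (a + d)).indicator g) d]
  exact integral_congr_ae (Filter.Eventually.of_forall fun x => (h1 x).symm)

/-- For `α, β, γ > 0`, `z < 0` and `c = -z/β > 0`, the function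
`t ↦ e^{z t} α β (1 + β t)^{-(1+γ)}` is integrable on `[0, ∞)` and
`∫₀^∞ e^{z t} α β (1 + β t)^{-(1+γ)} dt = α e^{c} c^{γ} ∫_c^∞ e^{-u} u^{-(1+γ)} du`
(the Laplace transform of the power-law kernel as an incomplete Gamma integral). -/
theorem stmt_16 (α β γ z : ℝ) (hα : 0 < α) (hβ : 0 < β) (hγ : 0 < γ) (hz : z < 0)
    (c : ℝ) (hc : c = -z / β) :
    IntegrableOn (fun t => Real.exp (z * t) * (α * β * (1 + β * t) ^ (-(1 + γ))))
      (Set.Ioi 0) ∧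
    ∫ t in Set.Ioi (0 : ℝ), Real.exp (z * t) * (α * β * (1 + β * t) ^ (-(1 + γ)))
      = α * Real.exp c * c ^ γ *
        ∫ u in Set.Ioi c, Real.exp (-u) * u ^ (-(1 + γ)) := by
  have hc0 : 0 < c := by
    have hz' : 0 < -z := by linarith
    rw [hc]; positivity
  have hzc : z = -(c * β) := by
    rw [hc, div_mul_cancel₀ _ hβ.ne', neg_neg]
  -- integrability
  have hint : IntegrableOn (fun t => Real.exp (z * t) * (α * β * (1 + β * t) ^ (-(1 + γ))))
      (Set.Ioi 0) := by
    have hg : IntegrableOn (fun t => α * β * Real.exp (-(-z) * t)) (Set.Ioi 0) :=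
      ((exp_neg_integrableOn_Ioi 0 (by linarith : (0:ℝ) < -z)).const_mul (α * β))
    refine Integrable.mono hg ?_ ?_
    · apply Measurable.aestronglyMeasurable
      fun_prop
    · filter_upwards [ae_restrict_mem measurableSet_Ioi] with t ht
      have ht0 : (0:ℝ) < t := ht
      have h1 : (1:ℝ) ≤ 1 + β * t := by nlinarith
      have hpow : (1 + β * t) ^ (-(1 + γ)) ≤ 1 :=
        Real.rpow_le_one_of_one_le_of_nonpos h1 (by linarith)
      have hpow0 : 0 ≤ (1 + β * t) ^ (-(1 + γ)) := Real.rpow_nonneg (by linarith) _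
      rw [Real.norm_eq_abs, Real.norm_eq_abs]
      rw [abs_of_nonneg (by positivity), abs_of_nonneg (by positivity)]
      have : Real.exp (-(-z) * t) = Real.exp (z * t) := by ring_nf
      rw [this]
      calc Real.exp (z * t) * (α * β * (1 + β * t) ^ (-(1 + γ)))
          ≤ Real.exp (z * t) * (α * β * 1) := by
            apply mul_le_mul_of_nonneg_left _ (Real.exp_pos _).le
            exact mul_le_mul_of_nonneg_left hpow (by positivity)
        _ = α * β * Real.exp (z * t) := by ring
  refine ⟨hint, ?_⟩
  -- pointwise identity on Ioi 0
  have hcb : 0 < c * β := by positivity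
  have key : ∀ t ∈ Set.Ioi (0:ℝ),
      Real.exp (z * t) * (α * β * (1 + β * t) ^ (-(1 + γ)))
        = (α * Real.exp c * c ^ γ * (c * β)) *
          (Real.exp (-(c * β * t + c)) * (c * β * t + c) ^ (-(1 + γ))) := by
    intro t ht
    have ht0 : (0:ℝ) < t := ht
    have h1 : (0:ℝ) < 1 + β * t := by nlinarith
    have hu : c * β * t + c = c * (1 + β * t) := by ring
    rw [hu, Real.mul_rpow hc0.le h1.le]
    have hce : c ^ (-(1 + γ)) = (c ^ γ * c)⁻¹ := by
      rw [Real.rpow_neg hc0.le, Real.rpow_add hc0, Real.rpow_one, mul_comm]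
    rw [hce]
    have hexp : Real.exp (-(c * (1 + β * t))) = Real.exp (z * t) / Real.exp c := by
      rw [← Real.exp_sub]; congr 1; rw [hzc]; ring
    rw [hexp]
    have h2 : c ^ γ * c ≠ 0 := by positivity
    field_simp
  rw [setIntegral_congr_fun measurableSet_Ioi key, integral_const_mul]
  -- change of variables
  have hsub : (∫ t in Set.Ioi (0:ℝ),
      Real.exp (-(c * β * t + c)) * (c * β * t + c) ^ (-(1 + γ)))
      = (c * β)⁻¹ * ∫ u in Set.Ioi c, Real.exp (-u) * u ^ (-(1 + γ)) := by
    have h1 := integral_comp_mul_left_Ioi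
      (fun s => Real.exp (-(s + c)) * (s + c) ^ (-(1 + γ))) 0 hcb
    simp only [mul_zero] at h1
    rw [show (fun t => Real.exp (-(c * β * t + c)) * (c * β * t + c) ^ (-(1 + γ)))
        = fun t => (fun s => Real.exp (-(s + c)) * (s + c) ^ (-(1 + γ))) (c * β * t)
        from rfl, h1, smul_eq_mul]
    congr 1
    have := integral_comp_add_right_Ioi (fun u => Real.exp (-u) * u ^ (-(1 + γ))) 0 c
    simpa using this
  rw [hsub]
  field_simp
end
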